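/- Suppose |φ₀⟩, |φ₁⟩ are unit vectors with |⟨φ₀|φ₁⟩|² = cos²θ (sin θ > 0), and σ, σ̄, τ, τ̄ are density operators with (a) q·σ + (1-q)·σ̄ = q·τ + (1-q)·τ̄ for some 0 < q < 1, (b) D(σ,|φ₀⟩⟨φ₀|) ≤ √(γ/q), D(τ̄,|φ₀⟩⟨φ₀|) ≤ √(γ/(1-q)), D(σ̄,|φ₁⟩⟨φ₁|) ≤ √(γ/(1-q)), D(τ,|φ₁⟩⟨φ₁|) ≤ √(γ/q). Then q - 1/2 ≤ √(2γ)/sin²θ. -/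

import Mathlib

open ComplexOrder
open Matrix

/-- Trace distance D(ρ,ρ') = (1/2)·Tr √((ρ-ρ')ᴴ(ρ-ρ')). -/
noncomputable def traceDist {d : ℕ} (ρ σ : Matrix (Fin d) (Fin d) ℂ) : ℝ :=
  (1/2) * (((Matrix.posSemidef_conjTranspose_mul_self (ρ - σ)).isHermitian.eigenvectorUnitary.1 *
    Matrix.diagonal ((fun x : ℝ => (x : ℂ)) ∘ (Real.sqrt ·) ∘
      (Matrix.posSemidef_conjTranspose_mul_self (ρ - σ)).isHermitian.eigenvalues) *
    (star (Matrix.posSemidef_conjTranspose_mul_self (ρ - σ)).isHermitian.eigenvectorUnitary :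
      Matrix (Fin d) (Fin d) ℂ)).trace).re

section aux
variable {d : ℕ}


-- diag entries of PSD matrices have nonneg real trace
lemma psd_trace_re_nonneg (B : Matrix (Fin d) (Fin d) ℂ) (hB : B.PosSemidef) :
    0 ≤ B.trace.re := by
  rw [Matrix.trace, Complex.re_sum]
  apply Finset.sum_nonneg
  intro i _
  have h := hB.dotProduct_mulVec_nonneg (Pi.single i 1)
  have : dotProduct (star (Pi.single i 1)) (B *ᵥ Pi.single i 1) = B i i := by
    simp [Matrix.mulVec_single, dotProduct, Pi.single_apply, apply_ite]
  rw [this] at h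
  exact (Complex.le_def.mp h).1

lemma quad_nonneg (B : Matrix (Fin d) (Fin d) ℂ) (hB : B.PosSemidef) (φ : Fin d → ℂ) :
    0 ≤ (dotProduct (star φ) (B *ᵥ φ)).re :=
  (Complex.le_def.mp (hB.dotProduct_mulVec_nonneg φ)).1

lemma trace_vecMulVec_mul (φ : Fin d → ℂ) (B : Matrix (Fin d) (Fin d) ℂ) :
    (Matrix.vecMulVec φ (star φ) * B).trace = dotProduct (star φ) (B *ᵥ φ) := by
  simp only [Matrix.trace, Matrix.diag_apply, Matrix.mul_apply, Matrix.vecMulVec_apply,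
    dotProduct, Matrix.mulVec, Pi.star_apply]
  rw [Finset.sum_comm]
  congr 1; ext k
  rw [Finset.mul_sum]
  congr 1; ext i
  ring

lemma quad_le_trace (B : Matrix (Fin d) (Fin d) ℂ) (hB : B.PosSemidef)
    (φ : Fin d → ℂ) (hφ : dotProduct (star φ) φ = 1) :
    (dotProduct (star φ) (B *ᵥ φ)).re ≤ B.trace.re := by
  set P : Matrix (Fin d) (Fin d) ℂ := Matrix.vecMulVec φ (star φ) with hP
  have hP2 : P * P = P := by
    ext i j
    simp only [hP, Matrix.mul_apply, Matrix.vecMulVec_apply, Pi.star_apply]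
    have : ∀ k, φ i * star (φ k) * (φ k * star (φ j))
        = (φ i * star (φ j)) * (star (φ k) * φ k) := fun k => by ring
    rw [Finset.sum_congr rfl (fun k _ => this k), ← Finset.mul_sum]
    have : ∑ k, star (φ k) * φ k = 1 := by
      simpa [dotProduct] using hφ
    rw [this, mul_one]
  have hPH : Pᴴ = P := by
    ext i j
    simp [hP, Matrix.conjTranspose_apply, Matrix.vecMulVec_apply, mul_comm]
  set Q : Matrix (Fin d) (Fin d) ℂ := 1 - P with hQ
  have hQH : Qᴴ = Q := by simp [hQ, Matrix.conjTranspose_sub, hPH]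
  have hpsd : (Q * B * Qᴴ).PosSemidef := hB.mul_mul_conjTranspose_same Q
  have hQ2 : Q * Q = Q := by
    simp only [hQ, Matrix.sub_mul, Matrix.mul_sub, Matrix.one_mul, Matrix.mul_one, hP2]
    abel
  have htr : (Q * B * Qᴴ).trace = B.trace - dotProduct (star φ) (B *ᵥ φ) := by
    rw [hQH, Matrix.trace_mul_cycle, hQ2]
    rw [hQ, Matrix.sub_mul, Matrix.one_mul, Matrix.trace_sub, trace_vecMulVec_mul]
  have h0 := psd_trace_re_nonneg _ hpsd
  rw [htr, Complex.sub_re] at h0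
  linarith

open scoped MatrixOrder in
lemma key (A : Matrix (Fin d) (Fin d) ℂ) (hA : A.IsHermitian) (htr : A.trace = 0)
    (φ : Fin d → ℂ) (hφ : dotProduct (star φ) φ = 1) :
    |(dotProduct (star φ) (A *ᵥ φ)).re|
      ≤ (1/2) * (((Matrix.posSemidef_conjTranspose_mul_self A).isHermitian.eigenvectorUnitary.1 *
    Matrix.diagonal ((fun x : ℝ => (x : ℂ)) ∘ (Real.sqrt ·) ∘
      (Matrix.posSemidef_conjTranspose_mul_self A).isHermitian.eigenvalues) *
    (star (Matrix.posSemidef_conjTranspose_mul_self A).isHermitian.eigenvectorUnitary :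
      Matrix (Fin d) (Fin d) ℂ)).trace).re := by
  set U : Matrix (Fin d) (Fin d) ℂ := (hA.eigenvectorUnitary : Matrix (Fin d) (Fin d) ℂ) with hUdef
  set ev : Fin d → ℝ := hA.eigenvalues with hev
  have hU1 : star U * U = 1 := Matrix.UnitaryGroup.star_mul_self hA.eigenvectorUnitary
  set Dp : Matrix (Fin d) (Fin d) ℂ :=
    Matrix.diagonal (fun i => ((max (ev i) 0 : ℝ) : ℂ)) with hDp
  set Dn : Matrix (Fin d) (Fin d) ℂ :=
    Matrix.diagonal (fun i => ((max (-ev i) 0 : ℝ) : ℂ)) with hDn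
  set Ap : Matrix (Fin d) (Fin d) ℂ := U * Dp * star U with hApdef
  set An : Matrix (Fin d) (Fin d) ℂ := U * Dn * star U with hAndef
  have hspec : A = U * Matrix.diagonal (RCLike.ofReal ∘ ev) * star U := hA.spectral_theorem
  have hconjmul : ∀ D E : Matrix (Fin d) (Fin d) ℂ,
      (U * D * star U) * (U * E * star U) = U * (D * E) * star U := by
    intro D E
    calc (U * D * star U) * (U * E * star U)
        = U * D * (star U * U) * E * star U := by
          simp only [Matrix.mul_assoc]
      _ = U * (D * E) * star U := by rw [hU1]; simp only [Matrix.mul_assoc, Matrix.one_mul]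
  have hsub : Ap - An = A := by
    rw [hspec, hApdef, hAndef, ← Matrix.sub_mul, ← Matrix.mul_sub, hDp, hDn,
      Matrix.diagonal_sub]
    have : (fun i => ((max (ev i) 0 : ℝ) : ℂ) - ((max (-ev i) 0 : ℝ) : ℂ))
        = RCLike.ofReal ∘ ev := by
      funext i
      rw [← Complex.ofReal_sub, max_zero_sub_max_neg_zero_eq_self]
      rfl
    rw [this]
  have hDppsd : Dp.PosSemidef := Matrix.posSemidef_diagonal_iff.mpr
    (fun i => by exact_mod_cast Complex.zero_le_real.mpr (le_max_right _ _))
  have hDnpsd : Dn.PosSemidef := Matrix.posSemidef_diagonal_iff.mpr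
    (fun i => by exact_mod_cast Complex.zero_le_real.mpr (le_max_right _ _))
  have hAppsd : Ap.PosSemidef := hDppsd.mul_mul_conjTranspose_same U
  have hAnpsd : An.PosSemidef := hDnpsd.mul_mul_conjTranspose_same U
  set S : Matrix (Fin d) (Fin d) ℂ := Ap + An with hSdef
  have hSpsd : S.PosSemidef := hAppsd.add hAnpsd
  have hSeq : S = U * (Dp + Dn) * star U := by
    rw [hSdef, hApdef, hAndef, Matrix.mul_add, Matrix.add_mul]
  have hSsq : S ^ 2 = Aᴴ * A := by
    rw [hA.eq, hspec, pow_two, hSeq, hconjmul, hconjmul]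
    rw [hDp, hDn, Matrix.diagonal_add, Matrix.diagonal_mul_diagonal,
      Matrix.diagonal_mul_diagonal]
    have : (fun i => (((max (ev i) 0 : ℝ) : ℂ) + ((max (-ev i) 0 : ℝ) : ℂ))
          * (((max (ev i) 0 : ℝ) : ℂ) + ((max (-ev i) 0 : ℝ) : ℂ)))
        = (fun i => (RCLike.ofReal ∘ ev) i * (RCLike.ofReal ∘ ev) i) := by
      funext i
      rw [← Complex.ofReal_add, max_zero_add_max_neg_zero_eq_abs_self,
        ← Complex.ofReal_mul, ← abs_mul, abs_mul_self]
      simp [Function.comp]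
    rw [this]
  have hSsqrt : S = (Matrix.posSemidef_conjTranspose_mul_self A).isHermitian.eigenvectorUnitary.1 *
      Matrix.diagonal ((fun x : ℝ => (x : ℂ)) ∘ (Real.sqrt ·) ∘
        (Matrix.posSemidef_conjTranspose_mul_self A).isHermitian.eigenvalues) *
      (star (Matrix.posSemidef_conjTranspose_mul_self A).isHermitian.eigenvectorUnitary :
        Matrix (Fin d) (Fin d) ℂ) := by
    have h := CFC.sqrt_unique (a := Aᴴ * A) (b := S) (by rw [← pow_two]; exact hSsq) hSpsd.nonneg
    rw [CFC.sqrt_eq_cfc, cfc_nnreal_eq_real _ _ (Matrix.posSemidef_conjTranspose_mul_self A).nonneg,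
      (Matrix.posSemidef_conjTranspose_mul_self A).isHermitian.cfc_eq, Matrix.IsHermitian.cfc,
      Unitary.conjStarAlgAut_apply] at h
    have hf : ∀ x : ℝ, ((NNReal.sqrt x.toNNReal : ℝ)) = Real.sqrt x := fun x => by rw [Real.sqrt]
    rw [← h]
    simp only [Function.comp_def, hf]
    rfl
  -- traces
  have htrconj : ∀ D : Matrix (Fin d) (Fin d) ℂ, (U * D * star U).trace = D.trace := by
    intro D
    rw [Matrix.trace_mul_cycle, hU1, Matrix.one_mul]
  have htrA : Ap.trace - An.trace = 0 := by
    rw [← Matrix.trace_sub, hsub, htr]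
  have htrS : S.trace = 2 * Ap.trace := by
    rw [hSdef, Matrix.trace_add]
    have : An.trace = Ap.trace := by linear_combination -htrA
    rw [this]; ring
  -- quadratic forms
  have hq : dotProduct (star φ) (A *ᵥ φ)
      = dotProduct (star φ) (Ap *ᵥ φ) - dotProduct (star φ) (An *ᵥ φ) := by
    rw [← hsub, Matrix.sub_mulVec, dotProduct_sub]
  have h1 := quad_nonneg Ap hAppsd φ
  have h2 := quad_nonneg An hAnpsd φ
  have h3 := quad_le_trace Ap hAppsd φ hφ
  have h4 := quad_le_trace An hAnpsd φ hφ
  have htrAn : An.trace.re = Ap.trace.re := by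
    have : An.trace = Ap.trace := by linear_combination -htrA
    rw [this]
  rw [← hSsqrt, htrS]
  rw [hq, Complex.sub_re]
  rw [abs_le]
  constructor
  · have : (2 * Ap.trace).re = 2 * Ap.trace.re := by simp [Complex.mul_re]
    rw [this]; linarith [h2, h3]
  · have : (2 * Ap.trace).re = 2 * Ap.trace.re := by simp [Complex.mul_re]
    rw [this]; linarith [h1, h4, htrAn]

lemma vecMulVec_mulVec' (φ x : Fin d → ℂ) :
    (Matrix.vecMulVec φ (star φ)) *ᵥ x = (dotProduct (star φ) x) • φ := by
  ext i
  simp only [Matrix.mulVec, Matrix.vecMulVec_apply, dotProduct, Pi.smul_apply,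
    smul_eq_mul, Pi.star_apply]
  rw [Finset.sum_mul]
  congr 1; ext k; ring

lemma quad_vecMulVec (φ ψ : Fin d → ℂ) :
    dotProduct (star ψ) ((Matrix.vecMulVec φ (star φ)) *ᵥ ψ)
      = (dotProduct (star ψ) φ) * (dotProduct (star φ) ψ) := by
  rw [vecMulVec_mulVec', dotProduct_smul, smul_eq_mul, mul_comm]

lemma herm_vecMulVec (φ : Fin d → ℂ) : (Matrix.vecMulVec φ (star φ)).IsHermitian := by
  ext i j
  simp [Matrix.conjTranspose_apply, Matrix.vecMulVec_apply, mul_comm]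

lemma trace_vecMulVec (φ : Fin d → ℂ) :
    (Matrix.vecMulVec φ (star φ)).trace = dotProduct (star φ) φ := by
  simp [Matrix.trace, Matrix.vecMulVec_apply, dotProduct, mul_comm]

lemma dist_bound (ρ : Matrix (Fin d) (Fin d) ℂ) (hρ : ρ.IsHermitian) (hρtr : ρ.trace = 1)
    (ψ : Fin d → ℂ) (hψ : dotProduct (star ψ) ψ = 1)
    (φ : Fin d → ℂ) (hφ : dotProduct (star φ) φ = 1) :
    |(dotProduct (star φ) (ρ *ᵥ φ)).re
        - (dotProduct (star φ) ((Matrix.vecMulVec ψ (star ψ)) *ᵥ φ)).re|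
      ≤ traceDist ρ (Matrix.vecMulVec ψ (star ψ)) := by
  have h0 : (ρ - Matrix.vecMulVec ψ (star ψ)).trace = 0 := by
    rw [Matrix.trace_sub, hρtr, trace_vecMulVec, hψ]; ring
  have h := key (ρ - Matrix.vecMulVec ψ (star ψ)) (hρ.sub (herm_vecMulVec ψ)) h0 φ hφ
  rw [Matrix.sub_mulVec, dotProduct_sub, Complex.sub_re] at h
  unfold traceDist
  exact h

end aux

set_option maxHeartbeats 1000000 in
/-- the key estimate behind Theorem 1 of the paper. -/
theorem stmt3 {d : ℕ} (φ₀ φ₁ : Fin d → ℂ)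
    (hφ₀ : dotProduct (star φ₀) φ₀ = 1)
    (hφ₁ : dotProduct (star φ₁) φ₁ = 1)
    (θ : ℝ) (hθ : ‖dotProduct (star φ₀) φ₁‖ ^ 2 = Real.cos θ ^ 2)
    (hsin : 0 < Real.sin θ)
    (σ σ' τ τ' : Matrix (Fin d) (Fin d) ℂ)
    (hσ : σ.PosSemidef) (hσ' : σ'.PosSemidef) (hτ : τ.PosSemidef) (hτ' : τ'.PosSemidef)
    (hσtr : σ.trace = 1) (hσ'tr : σ'.trace = 1) (hτtr : τ.trace = 1) (hτ'tr : τ'.trace = 1)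
    (q γ : ℝ) (hq0 : 0 < q) (hq1 : q < 1) (hγ : 0 ≤ γ)
    (hmix : (q : ℂ) • σ + ((1 - q : ℝ) : ℂ) • σ' = (q : ℂ) • τ + ((1 - q : ℝ) : ℂ) • τ')
    (hDσ : traceDist σ (Matrix.vecMulVec φ₀ (star φ₀)) ≤ Real.sqrt (γ / q))
    (hDτ' : traceDist τ' (Matrix.vecMulVec φ₀ (star φ₀)) ≤ Real.sqrt (γ / (1 - q)))
    (hDσ' : traceDist σ' (Matrix.vecMulVec φ₁ (star φ₁)) ≤ Real.sqrt (γ / (1 - q)))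
    (hDτ : traceDist τ (Matrix.vecMulVec φ₁ (star φ₁)) ≤ Real.sqrt (γ / q)) :
    q - 1/2 ≤ Real.sqrt (2 * γ) / Real.sin θ ^ 2 := by
  set c := Real.cos θ ^ 2 with hcdef
  set s := Real.sin θ ^ 2 with hsdef
  have hs : 0 < s := pow_pos hsin 2
  have hc : c = 1 - s := by
    have := Real.sin_sq_add_cos_sq θ
    rw [hcdef, hsdef]; linarith
  -- values of the quadratic form at the two projectors
  have hv0 : (dotProduct (star φ₀) ((Matrix.vecMulVec φ₀ (star φ₀)) *ᵥ φ₀)).re = 1 := by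
    rw [quad_vecMulVec, hφ₀, mul_one]
    norm_num
  have hv1 : (dotProduct (star φ₀) ((Matrix.vecMulVec φ₁ (star φ₁)) *ᵥ φ₀)).re = c := by
    rw [quad_vecMulVec]
    have h1 : dotProduct (star φ₁) φ₀ = (starRingEnd ℂ) (dotProduct (star φ₀) φ₁) := by
      rw [← Complex.star_def, Matrix.star_dotProduct]
    rw [h1, Complex.mul_conj, Complex.normSq_eq_norm_sq, Complex.ofReal_re, hθ]
  -- the quadratic-form values of the four states
  set fσ := (dotProduct (star φ₀) (σ *ᵥ φ₀)).re with hfσ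
  set fσ' := (dotProduct (star φ₀) (σ' *ᵥ φ₀)).re with hfσ'
  set fτ := (dotProduct (star φ₀) (τ *ᵥ φ₀)).re with hfτ
  set fτ' := (dotProduct (star φ₀) (τ' *ᵥ φ₀)).re with hfτ'
  -- the mixing equation
  have hmix' : q * fσ + (1-q) * fσ' = q * fτ + (1-q) * fτ' := by
    have h := congrArg
      (fun M : Matrix (Fin d) (Fin d) ℂ => (dotProduct (star φ₀) (M *ᵥ φ₀)).re) hmix
    simpa [hfσ, hfσ', hfτ, hfτ', Matrix.add_mulVec, Matrix.smul_mulVec,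
      dotProduct_add, dotProduct_smul, smul_eq_mul, Complex.add_re,
      Complex.mul_re, Complex.ofReal_re, Complex.ofReal_im] using h
  -- distance bounds
  have b1 : |fσ - 1| ≤ Real.sqrt (γ / q) := by
    have h := dist_bound σ hσ.1 hσtr φ₀ hφ₀ φ₀ hφ₀
    rw [hv0] at h
    exact h.trans hDσ
  have b2 : |fτ' - 1| ≤ Real.sqrt (γ / (1 - q)) := by
    have h := dist_bound τ' hτ'.1 hτ'tr φ₀ hφ₀ φ₀ hφ₀
    rw [hv0] at h
    exact h.trans hDτ'
  have b3 : |fσ' - c| ≤ Real.sqrt (γ / (1 - q)) := by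
    have h := dist_bound σ' hσ'.1 hσ'tr φ₁ hφ₁ φ₀ hφ₀
    rw [hv1] at h
    exact h.trans hDσ'
  have b4 : |fτ - c| ≤ Real.sqrt (γ / q) := by
    have h := dist_bound τ hτ.1 hτtr φ₁ hφ₁ φ₀ hφ₀
    rw [hv1] at h
    exact h.trans hDτ
  -- arithmetic
  have hq1' : (0:ℝ) < 1 - q := by linarith
  have hsq1 : q * Real.sqrt (γ/q) = Real.sqrt (q*γ) := by
    have h : q*γ = q^2 * (γ/q) := by field_simp
    rw [h, Real.sqrt_mul (sq_nonneg q), Real.sqrt_sq hq0.le]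
  have hsq2 : (1-q) * Real.sqrt (γ/(1-q)) = Real.sqrt ((1-q)*γ) := by
    have h : (1-q)*γ = (1-q)^2 * (γ/(1-q)) := by field_simp
    rw [h, Real.sqrt_mul (sq_nonneg (1-q)), Real.sqrt_sq hq1'.le]
  have l1 : s - 2*Real.sqrt (γ/q) ≤ fσ - fτ := by
    have i1 := (abs_le.mp b1).1
    have i2 := (abs_le.mp b4).2
    rw [hc] at i2
    linarith
  have l2 : fτ' - fσ' ≤ s + 2*Real.sqrt (γ/(1-q)) := by
    have i1 := (abs_le.mp b2).2
    have i2 := (abs_le.mp b3).1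
    rw [hc] at i2
    linarith
  have e1 : q * (fσ - fτ) = (1-q) * (fτ' - fσ') := by ring_nf; linarith [hmix']
  have l3 : q * (s - 2*Real.sqrt (γ/q)) ≤ q * (fσ - fτ) :=
    mul_le_mul_of_nonneg_left l1 hq0.le
  have l4 : (1-q) * (fτ' - fσ') ≤ (1-q) * (s + 2*Real.sqrt (γ/(1-q))) :=
    mul_le_mul_of_nonneg_left l2 hq1'.le
  have key_ineq : (2*q - 1) * s ≤ 2 * (Real.sqrt (q*γ) + Real.sqrt ((1-q)*γ)) := by
    nlinarith [l3, l4, e1, hsq1, hsq2]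
  have hab : Real.sqrt (q*γ) * Real.sqrt ((1-q)*γ) ≤ γ/2 := by
    rw [← Real.sqrt_mul (show (0:ℝ) ≤ q*γ by positivity) ((1-q)*γ)]
    have h1 : q*γ*((1-q)*γ) ≤ (γ/2)^2 := by nlinarith [mul_nonneg (sq_nonneg γ) (sq_nonneg (q - 1/2))]
    calc Real.sqrt (q*γ*((1-q)*γ)) ≤ Real.sqrt ((γ/2)^2) := Real.sqrt_le_sqrt h1
      _ = γ/2 := Real.sqrt_sq (by linarith)
  have hsum : Real.sqrt (q*γ) + Real.sqrt ((1-q)*γ) ≤ Real.sqrt (2*γ) := by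
    have hnn : 0 ≤ Real.sqrt (q*γ) + Real.sqrt ((1-q)*γ) := by positivity
    have hsq : (Real.sqrt (q*γ) + Real.sqrt ((1-q)*γ))^2 ≤ 2*γ := by
      have ha := Real.sq_sqrt (show (0:ℝ) ≤ q*γ by positivity)
      have hb := Real.sq_sqrt (show (0:ℝ) ≤ (1-q)*γ by positivity)
      nlinarith [hab]
    calc Real.sqrt (q*γ) + Real.sqrt ((1-q)*γ)
        = Real.sqrt ((Real.sqrt (q*γ) + Real.sqrt ((1-q)*γ))^2) := (Real.sqrt_sq hnn).symm
      _ ≤ Real.sqrt (2*γ) := Real.sqrt_le_sqrt hsq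
  rw [le_div_iff₀ hs]
  nlinarith [key_ineq, hsum]
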